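/- For every sorted probability distribution p_1 ≥ ⋯ ≥ p_N ≥ 0 and every lying probability 0 ≤ p ≤ 1/2: G_opt(X) = G(X) − MAXCUT(G_X). -/

import Mathlib

open Finset

noncomputable def guess (N : ℕ) (q : Fin N → ℝ) : ℝ :=
  Finset.univ.inf' ⟨1, Finset.mem_univ 1⟩
    (fun σ : Equiv.Perm (Fin N) => ∑ k : Fin N, ((k : ℝ) + 1) * q (σ k))

noncomputable def guessA (N : ℕ) (q : Fin N → ℝ) (p : ℝ) (A : Finset (Fin N)) : ℝ :=
  ∑ y : Bool, Finset.univ.inf' ⟨1, Finset.mem_univ 1⟩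
    (fun σ : Equiv.Perm (Fin N) => ∑ k : Fin N,
      ((k : ℝ) + 1) * q (σ k) * (if ((σ k ∈ A) ↔ (y = true)) then 1 - p else p))

noncomputable def guessOpt (N : ℕ) (q : Fin N → ℝ) (p : ℝ) : ℝ :=
  Finset.univ.inf' ⟨∅, Finset.mem_univ ∅⟩ (fun A : Finset (Fin N) => guessA N q p A)

def zigzag (N : ℕ) : Finset (Fin N) := Finset.univ.filter (fun k => (k : ℕ) % 2 = 0)

noncomputable def wt (N : ℕ) (q : Fin N → ℝ) (p : ℝ) (i j : Fin N) : ℝ :=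
  max 0 ((1 - p) * min (q i) (q j) - p * max (q i) (q j))

noncomputable def cut (N : ℕ) (q : Fin N → ℝ) (p : ℝ) (A : Finset (Fin N)) : ℝ :=
  ∑ i ∈ A, ∑ j ∈ Aᶜ, wt N q p i j

noncomputable def maxcut (N : ℕ) (q : Fin N → ℝ) (p : ℝ) : ℝ :=
  Finset.univ.sup' ⟨∅, Finset.mem_univ ∅⟩ (fun A : Finset (Fin N) => cut N q p A)

/-! ### Auxiliary lemmas -/

section Aux

variable {N : ℕ}

lemma aux_sum_max_eq (w : Fin N → ℝ) :
    ∑ k : Fin N, ∑ m : Fin N, w (max k m)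
      = 2 * (∑ k : Fin N, ((k : ℝ) + 1) * w k) - ∑ k : Fin N, w k := by
  have hpt : ∀ k m : Fin N, w (max k m)
      = (if m ≤ k then w k else 0) + (if k < m then w m else 0) := by
    intro k m
    rcases le_or_gt m k with h | h
    · rw [max_eq_left h, if_pos h, if_neg (not_lt.mpr h), add_zero]
    · rw [max_eq_right h.le, if_neg (not_le.mpr h), if_pos h, zero_add]
  have h1 : ∀ k : Fin N, ∑ m : Fin N, (if m ≤ k then w k else 0) = ((k : ℝ) + 1) * w k := by
    intro k
    rw [Finset.sum_ite, Finset.sum_const, Finset.sum_const_zero, add_zero]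
    have hcard : (Finset.univ.filter (fun m : Fin N => m ≤ k)).card = (k : ℕ) + 1 := by
      have h : Finset.univ.filter (fun m : Fin N => m ≤ k) = Finset.Iic k := by
        ext m; simp
      rw [h, Fin.card_Iic]
    rw [hcard, nsmul_eq_mul]
    push_cast
    ring
  have h2 : ∑ k : Fin N, ∑ m : Fin N, (if k < m then w m else 0)
      = ∑ m : Fin N, (m : ℝ) * w m := by
    rw [Finset.sum_comm]
    refine Finset.sum_congr rfl fun m _ => ?_
    rw [Finset.sum_ite, Finset.sum_const, Finset.sum_const_zero, add_zero]
    have hcard : (Finset.univ.filter (fun k : Fin N => k < m)).card = (m : ℕ) := by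
      have h : Finset.univ.filter (fun k : Fin N => k < m) = Finset.Iio m := by
        ext k; simp
      rw [h, Fin.card_Iio]
    rw [hcard, nsmul_eq_mul]
  calc ∑ k : Fin N, ∑ m : Fin N, w (max k m)
      = ∑ k : Fin N, (∑ m : Fin N, (if m ≤ k then w k else 0)
          + ∑ m : Fin N, (if k < m then w m else 0)) := by
        refine Finset.sum_congr rfl fun k _ => ?_
        rw [← Finset.sum_add_distrib]
        exact Finset.sum_congr rfl fun m _ => hpt k m
    _ = ∑ k : Fin N, ((k : ℝ) + 1) * w k + ∑ m : Fin N, (m : ℝ) * w m := by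
        rw [Finset.sum_add_distrib, h2]
        exact congrArg (· + _) (Finset.sum_congr rfl fun k _ => h1 k)
    _ = 2 * (∑ k : Fin N, ((k : ℝ) + 1) * w k) - ∑ k : Fin N, w k := by
        rw [Finset.mul_sum, ← Finset.sum_sub_distrib, ← Finset.sum_add_distrib]
        exact Finset.sum_congr rfl fun k _ => by ring

lemma aux_inf'_perm (v : Fin N → ℝ) :
    (Finset.univ.inf' ⟨1, Finset.mem_univ 1⟩
      (fun σ : Equiv.Perm (Fin N) => ∑ k : Fin N, ((k : ℝ) + 1) * v (σ k)))
    = (∑ i, v i + ∑ i, ∑ j, min (v i) (v j)) / 2 := by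
  have hsum : ∀ σ : Equiv.Perm (Fin N), ∑ k, v (σ k) = ∑ i, v i := fun σ =>
    Equiv.sum_comp σ v
  have hS : ∀ σ : Equiv.Perm (Fin N),
      ∑ i, ∑ j, min (v (σ i)) (v (σ j)) = ∑ i, ∑ j, min (v i) (v j) := by
    intro σ
    calc ∑ i, ∑ j, min (v (σ i)) (v (σ j))
        = ∑ i, ∑ j, min (v (σ i)) (v j) :=
          Finset.sum_congr rfl fun i _ => Equiv.sum_comp σ (fun j => min (v (σ i)) (v j))
      _ = ∑ i, ∑ j, min (v i) (v j) :=
          Equiv.sum_comp σ (fun i => ∑ j, min (v i) (v j))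
  apply le_antisymm
  · set σ := Tuple.sort (fun i => -v i) with hσ
    have hmono := Tuple.monotone_sort (fun i => -v i)
    have hanti : ∀ k m : Fin N, k ≤ m → v (σ m) ≤ v (σ k) := by
      intro k m h
      have := hmono h
      simp only [Function.comp_apply] at this
      rw [← hσ] at this
      linarith
    refine le_trans (Finset.inf'_le _ (Finset.mem_univ σ)) (le_of_eq ?_)
    have hmax := aux_sum_max_eq (fun k => v (σ k))
    have hEq : ∑ k : Fin N, ∑ m : Fin N, v (σ (max k m))
        = ∑ i, ∑ j, min (v (σ i)) (v (σ j)) := by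
      refine Finset.sum_congr rfl fun k _ => Finset.sum_congr rfl fun m _ => ?_
      rcases le_total k m with h | h
      · rw [max_eq_right h]; exact (min_eq_right (hanti k m h)).symm
      · rw [max_eq_left h]; exact (min_eq_left (hanti m k h)).symm
    rw [hEq, hS σ] at hmax
    rw [hsum σ] at hmax
    linarith
  · refine Finset.le_inf' _ _ fun σ _ => ?_
    have hmax := aux_sum_max_eq (fun k => v (σ k))
    have hge : ∑ i, ∑ j, min (v (σ i)) (v (σ j)) ≤ ∑ k : Fin N, ∑ m : Fin N, v (σ (max k m)) := by
      refine Finset.sum_le_sum fun k _ => Finset.sum_le_sum fun m _ => ?_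
      rcases max_choice k m with h | h
      · rw [h]; exact min_le_left _ _
      · rw [h]; exact min_le_right _ _
    rw [hS σ] at hge
    rw [hsum σ] at hmax
    linarith

lemma aux_min_mul (a b c : ℝ) (hc : 0 ≤ c) : min (a * c) (b * c) = min a b * c := by
  rcases le_total a b with h | h
  · rw [min_eq_left (mul_le_mul_of_nonneg_right h hc), min_eq_left h]
  · rw [min_eq_right (mul_le_mul_of_nonneg_right h hc), min_eq_right h]

lemma aux_cross_le (a b p : ℝ) (ha : 0 ≤ a) (hb : 0 ≤ b) (hba : b ≤ a)
    (hp0 : 0 ≤ p) (hp : p ≤ 1 / 2) :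
    min (a * (1 - p)) (b * p) + min (a * p) (b * (1 - p))
      = min a b - max 0 ((1 - p) * min a b - p * max a b) := by
  have h1 : min (a * (1 - p)) (b * p) = b * p := min_eq_right (by nlinarith)
  rw [h1, min_eq_right hba, max_eq_left hba]
  rcases le_total (a * p) (b * (1 - p)) with h | h
  · rw [min_eq_left h, max_eq_right (by nlinarith)]; ring
  · rw [min_eq_right h, max_eq_left (by nlinarith)]; ring

lemma aux_cross (a b p : ℝ) (ha : 0 ≤ a) (hb : 0 ≤ b)
    (hp0 : 0 ≤ p) (hp : p ≤ 1 / 2) :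
    min (a * (1 - p)) (b * p) + min (a * p) (b * (1 - p))
      = min a b - max 0 ((1 - p) * min a b - p * max a b) := by
  rcases le_total b a with h | h
  · exact aux_cross_le a b p ha hb h hp0 hp
  · have h2 := aux_cross_le b a p hb ha h hp0 hp
    rw [min_comm (b * (1 - p)) (a * p), min_comm (b * p) (a * (1 - p)), add_comm,
      min_comm b a, max_comm b a] at h2
    exact h2

lemma aux_wt_symm (q : Fin N → ℝ) (p : ℝ) (i j : Fin N) :
    wt N q p i j = wt N q p j i := by
  unfold wt
  rw [min_comm (q i) (q j), max_comm (q i) (q j)]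

lemma aux_guessA_eq (q : Fin N → ℝ) (hnn : ∀ i, 0 ≤ q i)
    (p : ℝ) (hp0 : 0 ≤ p) (hp : p ≤ 1 / 2) (A : Finset (Fin N)) :
    guessA N q p A = guess N q - cut N q p A := by
  classical
  set v : Bool → Fin N → ℝ :=
    fun y i => q i * (if ((i ∈ A) ↔ (y = true)) then 1 - p else p) with hv
  have hy : ∀ y : Bool,
      (Finset.univ.inf' ⟨1, Finset.mem_univ 1⟩
        (fun σ : Equiv.Perm (Fin N) => ∑ k : Fin N,
          ((k : ℝ) + 1) * q (σ k) * (if ((σ k ∈ A) ↔ (y = true)) then 1 - p else p)))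
      = (∑ i, v y i + ∑ i, ∑ j, min (v y i) (v y j)) / 2 := by
    intro y
    have h := aux_inf'_perm (v y)
    rw [← h]
    refine Finset.inf'_congr _ rfl fun σ _ => ?_
    refine Finset.sum_congr rfl fun k _ => ?_
    simp only [hv]
    ring
  have hguessA : guessA N q p A
      = (∑ i, v true i + ∑ i, ∑ j, min (v true i) (v true j)) / 2
        + (∑ i, v false i + ∑ i, ∑ j, min (v false i) (v false j)) / 2 := by
    unfold guessA
    rw [Fintype.sum_bool, hy true, hy false]
  have hsum1 : ∑ i, v true i + ∑ i, v false i = ∑ i, q i := by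
    rw [← Finset.sum_add_distrib]
    refine Finset.sum_congr rfl fun i _ => ?_
    by_cases h : i ∈ A <;> simp [hv, h] <;> ring
  -- the pair contribution
  set c : Fin N → Fin N → ℝ := fun i j =>
    if i ∈ A then (if j ∈ A then 0 else wt N q p i j)
    else (if j ∈ A then wt N q p i j else 0) with hc
  have hpt : ∀ i j : Fin N,
      min (v true i) (v true j) + min (v false i) (v false j)
        = min (q i) (q j) - c i j := by
    intro i j
    by_cases hi : i ∈ A <;> by_cases hj : j ∈ A <;>
      simp only [hv, hc, hi, hj, if_true, if_false, iff_true, iff_false,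
        Bool.true_eq_false, Bool.false_eq_true, not_true, not_false_iff]
    · rw [aux_min_mul _ _ _ (by linarith : (0:ℝ) ≤ 1 - p), aux_min_mul _ _ _ hp0]; ring
    · rw [aux_cross (q i) (q j) p (hnn i) (hnn j) hp0 hp]; unfold wt; ring
    · rw [add_comm, aux_cross (q i) (q j) p (hnn i) (hnn j) hp0 hp]; unfold wt; ring
    · rw [aux_min_mul _ _ _ hp0, aux_min_mul _ _ _ (by linarith : (0:ℝ) ≤ 1 - p)]; ring
  have hcsum : ∑ i, ∑ j, c i j = 2 * cut N q p A := by
    have hin : ∀ i ∈ A, ∑ j, c i j = ∑ j ∈ Aᶜ, wt N q p i j := by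
      intro i hi
      rw [← Finset.sum_add_sum_compl A (fun j => c i j)]
      have e1 : ∑ j ∈ A, c i j = 0 := by
        refine Finset.sum_eq_zero fun j hj => ?_
        simp [hc, hi, hj]
      have e2 : ∑ j ∈ Aᶜ, c i j = ∑ j ∈ Aᶜ, wt N q p i j := by
        refine Finset.sum_congr rfl fun j hj => ?_
        rw [Finset.mem_compl] at hj
        simp [hc, hi, hj]
      rw [e1, e2, zero_add]
    have hout : ∀ i ∈ Aᶜ, ∑ j, c i j = ∑ j ∈ A, wt N q p i j := by
      intro i hi
      rw [Finset.mem_compl] at hi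
      rw [← Finset.sum_add_sum_compl A (fun j => c i j)]
      have e1 : ∑ j ∈ A, c i j = ∑ j ∈ A, wt N q p i j := by
        refine Finset.sum_congr rfl fun j hj => ?_
        simp [hc, hi, hj]
      have e2 : ∑ j ∈ Aᶜ, c i j = 0 := by
        refine Finset.sum_eq_zero fun j hj => ?_
        rw [Finset.mem_compl] at hj
        simp [hc, hi, hj]
      rw [e1, e2, add_zero]
    rw [← Finset.sum_add_sum_compl A (fun i => ∑ j, c i j),
      Finset.sum_congr rfl hin, Finset.sum_congr rfl hout]
    have hswap : ∑ i ∈ Aᶜ, ∑ j ∈ A, wt N q p i j = ∑ i ∈ A, ∑ j ∈ Aᶜ, wt N q p i j := by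
      rw [Finset.sum_comm]
      exact Finset.sum_congr rfl fun i _ => Finset.sum_congr rfl fun j _ =>
        aux_wt_symm q p j i
    rw [hswap]
    unfold cut
    ring
  have hS2 : ∑ i, ∑ j, min (v true i) (v true j) + ∑ i, ∑ j, min (v false i) (v false j)
      = ∑ i, ∑ j, min (q i) (q j) - 2 * cut N q p A := by
    rw [← hcsum, ← Finset.sum_add_distrib, ← Finset.sum_sub_distrib]
    refine Finset.sum_congr rfl fun i _ => ?_
    rw [← Finset.sum_add_distrib, ← Finset.sum_sub_distrib]
    exact Finset.sum_congr rfl fun j _ => hpt i j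
  have hguess : guess N q = (∑ i, q i + ∑ i, ∑ j, min (q i) (q j)) / 2 := by
    unfold guess
    exact aux_inf'_perm q
  rw [hguessA, hguess]
  linarith

lemma aux_inf'_sub {α : Type*} (s : Finset α) (H : s.Nonempty) (c : ℝ) (f : α → ℝ) :
    s.inf' H (fun a => c - f a) = c - s.sup' H f := by
  apply le_antisymm
  · obtain ⟨a, ha, hEq⟩ := Finset.exists_mem_eq_sup' H f
    calc s.inf' H (fun a => c - f a) ≤ c - f a := Finset.inf'_le _ ha
      _ = c - s.sup' H f := by rw [hEq]
  · exact Finset.le_inf' _ _ fun a ha => sub_le_sub_left (Finset.le_sup' f ha) c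

end Aux

theorem stmt_9 (N : ℕ) (hN : 1 ≤ N) (q : Fin N → ℝ)
    (hnn : ∀ i, 0 ≤ q i) (hsum : ∑ i, q i = 1)
    (hsort : ∀ i j : Fin N, i ≤ j → q j ≤ q i)
    (p : ℝ) (hp0 : 0 ≤ p) (hp : p ≤ 1 / 2) :
    guessOpt N q p = guess N q - maxcut N q p := by
  unfold guessOpt maxcut
  refine (Finset.inf'_congr _ rfl (fun A _ => aux_guessA_eq q hnn p hp0 hp A)).trans ?_
  exact aux_inf'_sub _ _ _ _
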